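/- Let a group Γ act by automorphisms α on a countable abelian group Σ in which every nontrivial element has order 2, and let G = Σ ⋊ Γ be the semidirect product. Let C be an abelian group that is 2-divisible and has no elements of order 2. Then the map Ψ : H²(Γ,C) → H²(G,C) induced by sending ω to the cocycle (Ψω)((a,g),(b,h)) = ω(g,h) is a group isomorphism. -/

import Mathlib

/-- A normalized 2-cocycle on a group `G` with values in an abelian group `C`. -/
def IsCocycle {G C : Type*} [Group G] [AddCommGroup C] (Ω : G → G → C) : Prop :=
  (∀ g h k, Ω g h + Ω (g * h) k = Ω g (h * k) + Ω h k) ∧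
  (∀ g, Ω g 1 = 0) ∧ (∀ g, Ω 1 g = 0)

/-- A 2-coboundary on a group `G` with values in an abelian group `C`. -/
def IsCoboundary {G C : Type*} [Group G] [AddCommGroup C] (Ω : G → G → C) : Prop :=
  ∃ F : G → C, F 1 = 0 ∧ ∀ g h, Ω g h = F g + F h - F (g * h)

section Aux

variable {G H C : Type*} [Group G] [Group H] [AddCommGroup C]

/-- Pullback of a cocycle along a group hom is a cocycle. -/
lemma aux_cocycle_comp (f : H →* G) {Ω : G → G → C} (h : IsCocycle Ω) :
    IsCocycle (fun a b => Ω (f a) (f b)) := by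
  obtain ⟨h1, h2, h3⟩ := h
  exact ⟨fun a b c => by simpa [map_mul] using h1 (f a) (f b) (f c),
    fun a => by simpa using h2 (f a), fun a => by simpa using h3 (f a)⟩

/-- Subtracting a coboundary from a cocycle yields a cocycle. -/
lemma aux_cocycle_sub {Ω : G → G → C} {F : G → C} (hΩ : IsCocycle Ω) (hF : F 1 = 0) :
    IsCocycle (fun x y => Ω x y - (F x + F y - F (x * y))) := by
  obtain ⟨h1, h2, h3⟩ := hΩ
  refine ⟨fun g h k => ?_, fun g => by simp [h2 g, hF], fun g => by simp [h3 g, hF]⟩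
  show Ω g h - (F g + F h - F (g * h)) + (Ω (g * h) k - (F (g * h) + F k - F (g * h * k))) =
    Ω g (h * k) - (F g + F (h * k) - F (g * (h * k))) + (Ω h k - (F h + F k - F (h * k)))
  rw [mul_assoc g h k]
  linear_combination (norm := abel1) h1 g h k

/-- A cocycle on an abelian group of exponent two, with values in a group with no
2-torsion, is symmetric. -/
lemma aux_sym {A : Type*} [CommGroup A] (hA : ∀ a : A, a * a = 1)
    (hno2 : ∀ c : C, c + c = 0 → c = 0) {β : A → A → C} (hβ : IsCocycle β) :
    ∀ a b, β a b = β b a := by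
  obtain ⟨h1, h2, h3⟩ := hβ
  have cadd : ∀ a b k : A,
      β (a * b) k - β k (a * b) = (β a k - β k a) + (β b k - β k b) := by
    intro a b k
    have i := h1 a b k
    have ii := h1 k a b
    have iii := h1 a k b
    rw [mul_comm k a] at ii
    rw [mul_comm k b] at iii
    linear_combination (norm := abel1) i + ii - iii
  intro a b
  have h := cadd a a b
  rw [hA a, h3 b, h2 b] at h
  have h0 : β a b - β b a = 0 := by
    apply hno2
    linear_combination (norm := abel1) -h
  linear_combination (norm := abel1) h0

/-- A cocycle on an abelian group of exponent two, with values in a uniquely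
2-divisible group, is a coboundary. -/
lemma aux_split {A : Type*} [CommGroup A] (hA : ∀ a : A, a * a = 1)
    (h2div : ∀ c : C, ∃ d : C, d + d = c) (hno2 : ∀ c : C, c + c = 0 → c = 0)
    {β : A → A → C} (hβ : IsCocycle β) : IsCoboundary β := by
  have hsym := aux_sym hA hno2 hβ
  obtain ⟨h1, h2, h3⟩ := hβ
  choose half hhalf using h2div
  have two_inj : ∀ x y : C, x + x = y + y → x = y := by
    intro x y h
    have h' : (x - y) + (x - y) = 0 := by linear_combination (norm := abel1) h
    have := hno2 _ h'
    linear_combination (norm := abel1) this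
  have key : ∀ a b : A, β a (a * b) = β a a - β a b := by
    intro a b
    have hab : b * (a * b) = a := by
      rw [mul_comm a b, ← mul_assoc, hA b, one_mul]
    have hA1 := h1 a b (a * b)
    have hB1 := h1 b (a * b) (a * b)
    rw [hab] at hA1 hB1
    rw [hA (a * b), h2 b] at hB1
    linear_combination (norm := abel1) hA1 + hB1
  have qid : ∀ a b : A, β (a * b) (a * b) + (β a b + β a b) = β a a + β b b := by
    intro a b
    have hab : b * (a * b) = a := by
      rw [mul_comm a b, ← mul_assoc, hA b, one_mul]
    have hB1 := h1 b (a * b) (a * b)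
    rw [hab, hA (a * b), h2 b] at hB1
    -- hB1 : β b (a*b) + β a (a*b) = 0 + β (a*b) (a*b)
    have e1 := key a b
    have e2 : β b (a * b) = β b b - β a b := by
      have := key b a
      rw [mul_comm b a, hsym b a] at this
      exact this
    rw [e1, e2] at hB1
    linear_combination (norm := abel1) -hB1
  refine ⟨fun a => half (β a a), ?_, ?_⟩
  · apply two_inj
    rw [hhalf]
    rw [h2 1]
    abel
  · intro a b
    apply two_inj
    have expand : (half (β a a) + half (β b b) - half (β (a * b) (a * b))) +
        (half (β a a) + half (β b b) - half (β (a * b) (a * b))) =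
        (half (β a a) + half (β a a)) + ((half (β b b) + half (β b b)) -
          (half (β (a * b) (a * b)) + half (β (a * b) (a * b)))) := by abel
    rw [expand, hhalf, hhalf, hhalf]
    linear_combination (norm := abel1) qid a b

end Aux

/-- Let the group `Γ` act by automorphisms `α` on a countable abelian group `Σ` in which
every nontrivial element has order 2, let `G = Σ ⋊ Γ` and let `C` be a 2-divisible abelian
group with no elements of order 2. Then `Ψ : H²(Γ,C) → H²(G,C)`,
`(Ψω)((a,g),(b,h)) = ω(g,h)`, is a group isomorphism. Expressed at the level of cocycles:
`Ψω` is a cocycle; `Ψω` is a coboundary iff `ω` is (well-definedness and injectivity); and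
every cocycle on `G` is cohomologous to some `Ψω` (surjectivity). -/
theorem secondCohomology_semidirect_exponentTwo_iso
    {Γ Sg C : Type*} [Group Γ] [CommGroup Sg] [Countable Sg] [AddCommGroup C]
    (hSg : ∀ a : Sg, a * a = 1) (α : Γ →* MulAut Sg)
    (h2div : ∀ c : C, ∃ d : C, d + d = c)
    (hno2 : ∀ c : C, c + c = 0 → c = 0) :
    (∀ ω : Γ → Γ → C, IsCocycle ω →
      IsCocycle (fun x y : Sg ⋊[α] Γ => ω x.right y.right))
    ∧
    (∀ ω : Γ → Γ → C, IsCocycle ω →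
      (IsCoboundary (fun x y : Sg ⋊[α] Γ => ω x.right y.right) ↔ IsCoboundary ω))
    ∧
    (∀ Ω : (Sg ⋊[α] Γ) → (Sg ⋊[α] Γ) → C, IsCocycle Ω →
      ∃ ω : Γ → Γ → C, IsCocycle ω ∧
        IsCoboundary (fun x y : Sg ⋊[α] Γ => Ω x y - ω x.right y.right)) := by
  classical
  refine ⟨?_, ?_, ?_⟩
  · -- Ψω is a cocycle
    rintro ω ⟨h1, h2, h3⟩
    refine ⟨fun x y z => ?_, fun x => ?_, fun x => ?_⟩
    · simpa [SemidirectProduct.mul_right] using h1 x.right y.right z.right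
    · simpa [SemidirectProduct.one_right] using h2 x.right
    · simpa [SemidirectProduct.one_right] using h3 x.right
  · -- Ψω coboundary ↔ ω coboundary
    intro ω hω
    constructor
    · rintro ⟨F, hF1, hF⟩
      refine ⟨fun g => F (SemidirectProduct.inr g), by simpa using hF1, fun g h => ?_⟩
      have := hF (SemidirectProduct.inr g) (SemidirectProduct.inr h)
      simpa [← map_mul] using this
    · rintro ⟨f, hf1, hf⟩
      refine ⟨fun x => f x.right, by simpa [SemidirectProduct.one_right] using hf1,
        fun x y => ?_⟩
      simp only [SemidirectProduct.mul_right]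
      exact hf x.right y.right
  · -- surjectivity
    intro Ω hΩ
    set inl : Sg →* Sg ⋊[α] Γ := SemidirectProduct.inl with hinldef
    set inr : Γ →* Sg ⋊[α] Γ := SemidirectProduct.inr with hinrdef
    have hβ : IsCocycle (fun a b : Sg => Ω (inl a) (inl b)) := aux_cocycle_comp inl hΩ
    obtain ⟨F, hF1, hFβ⟩ := aux_split hSg h2div hno2 hβ
    -- F' : inflate F to the semidirect product via left
    set F' : Sg ⋊[α] Γ → C := fun x => F x.left with hF'
    have hF'1 : F' 1 = 0 := by
      simp only [hF', SemidirectProduct.one_left, hF1]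
    set Ω1 : (Sg ⋊[α] Γ) → (Sg ⋊[α] Γ) → C :=
      fun x y => Ω x y - (F' x + F' y - F' (x * y)) with hΩ1
    have hΩ1c : IsCocycle Ω1 := aux_cocycle_sub hΩ hF'1
    set Fc : Sg ⋊[α] Γ → C := fun x => F x.left - Ω1 (inl x.left) (inr x.right) with hFc
    have hFc_inl : ∀ a, Fc (inl a) = F a := by
      intro a
      simp only [hFc, hinldef, SemidirectProduct.left_inl, SemidirectProduct.right_inl,
        map_one, hΩ1c.2.1, sub_zero]
    have hFc_inr : ∀ g, Fc (inr g) = 0 := by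
      intro g
      simp only [hFc, hinrdef, hinldef, SemidirectProduct.left_inr, SemidirectProduct.right_inr,
        map_one, hΩ1c.2.2, hF1, sub_zero]
    have hleft_mul : ∀ (a : Sg) (g : Γ), ((inl a * inr g : Sg ⋊[α] Γ)).left = a := by
      intro a g
      simp [hinldef, hinrdef, SemidirectProduct.mul_left]
    have hright_mul : ∀ (a : Sg) (g : Γ), ((inl a * inr g : Sg ⋊[α] Γ)).right = g := by
      intro a g
      simp [hinldef, hinrdef, SemidirectProduct.mul_right]
    have hFc_mul : ∀ (a : Sg) (g : Γ), Fc (inl a * inr g) = F a - Ω1 (inl a) (inr g) := by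
      intro a g
      simp only [hFc, hleft_mul, hright_mul]
    have hFc1 : Fc 1 = 0 := by
      simp only [hFc, SemidirectProduct.one_left, SemidirectProduct.one_right,
        map_one, hΩ1c.2.1, hF1, sub_zero]
    set Ω2 : (Sg ⋊[α] Γ) → (Sg ⋊[α] Γ) → C :=
      fun x y => Ω x y - (Fc x + Fc y - Fc (x * y)) with hΩ2
    have hΩ2c : IsCocycle Ω2 := aux_cocycle_sub hΩ hFc1
    -- P1 : Ω2 vanishes on inl × inl
    have P1 : ∀ a b : Sg, Ω2 (inl a) (inl b) = 0 := by
      intro a b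
      have h := hFβ a b
      simp only [hΩ2, ← map_mul, hFc_inl, h]
      abel
    -- P2 : Ω2 vanishes on inl × inr
    have P2 : ∀ (a : Sg) (g : Γ), Ω2 (inl a) (inr g) = 0 := by
      intro a g
      simp only [hΩ2, hFc_inl, hFc_inr, hFc_mul, hΩ1, hF']
      simp only [hleft_mul, hinldef, hinrdef, SemidirectProduct.left_inl,
        SemidirectProduct.left_inr, hF1]
      rw [show (SemidirectProduct.inl a * SemidirectProduct.inr g : Sg ⋊[α] Γ).left = a from hleft_mul a g]
      abel
    have inrinl : ∀ (g : Γ) (b : Sg),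
        (inr g : Sg ⋊[α] Γ) * inl b = inl (α g b) * inr g := by
      intro g b
      ext
      · simp [hinldef, hinrdef, SemidirectProduct.mul_left]
      · simp [hinldef, hinrdef, SemidirectProduct.mul_right]
    -- Ω2 (inl c) (inl c' * inr g) = 0
    have step_cc : ∀ (c c' : Sg) (g : Γ), Ω2 (inl c) (inl c' * inr g) = 0 := by
      intro c c' g
      have h := hΩ2c.1 (inl c) (inl c') (inr g)
      rw [← map_mul, P1, P2, P2] at h
      linear_combination (norm := abel1) -h
    -- Ω2 (inl c * inr g) (inr h) = Ω2 (inr g) (inr h)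
    have step1 : ∀ (c : Sg) (g h : Γ),
        Ω2 (inl c * inr g) (inr h) = Ω2 (inr g) (inr h) := by
      intro c g h
      have hh := hΩ2c.1 (inl c) (inr g) (inr h)
      rw [P2, ← map_mul, P2] at hh
      linear_combination (norm := abel1) hh
    -- P3 : Ω2 vanishes on inr × inl
    have P3 : ∀ (g : Γ) (b : Sg), Ω2 (inr g) (inl b) = 0 := by
      intro g b
      have hom : ∀ b b' : Sg,
          Ω2 (inr g) (inl (b * b')) = Ω2 (inr g) (inl b) + Ω2 (inr g) (inl b') := by
        intro b b'
        have h := hΩ2c.1 (inr g) (inl b) (inl b')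
        rw [P1, inrinl, ← map_mul] at h
        have h2 := hΩ2c.1 (inl (α g b)) (inr g) (inl b')
        rw [P2, inrinl, step_cc] at h2
        linear_combination (norm := abel1) h2 - h
      have h := hom b b
      rw [hSg b, map_one, hΩ2c.2.1] at h
      exact hno2 _ h.symm
    -- the chain: Ω2 x y depends only on the right components
    have step2 : ∀ (g : Γ) (y : Sg ⋊[α] Γ), Ω2 (inr g) y = Ω2 (inr g) (inr y.right) := by
      intro g y
      conv_lhs => rw [← SemidirectProduct.inl_left_mul_inr_right y]
      have h := hΩ2c.1 (inr g) (inl y.left) (inr y.right)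
      rw [P3, P2, inrinl, step1] at h
      linear_combination (norm := abel1) -h
    have step3 : ∀ x y : Sg ⋊[α] Γ, Ω2 x y = Ω2 (inr x.right) y := by
      intro x y
      conv_lhs => rw [← SemidirectProduct.inl_left_mul_inr_right x]
      have h := hΩ2c.1 (inl x.left) (inr x.right) y
      rw [P2] at h
      have hz : Ω2 (inl x.left) (inr x.right * y) = 0 := by
        conv_lhs => rw [← SemidirectProduct.inl_left_mul_inr_right y]
        rw [← mul_assoc, inrinl, mul_assoc, ← map_mul]
        exact step_cc _ _ _
      rw [hz] at h
      linear_combination (norm := abel1) h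
    have hmain : ∀ x y : Sg ⋊[α] Γ, Ω2 x y = Ω2 (inr x.right) (inr y.right) :=
      fun x y => (step3 x y).trans (step2 x.right y)
    refine ⟨fun g h => Ω2 (inr g) (inr h), aux_cocycle_comp inr hΩ2c, Fc, hFc1, fun x y => ?_⟩
    show Ω x y - Ω2 (inr x.right) (inr y.right) = Fc x + Fc y - Fc (x * y)
    have h := hmain x y
    rw [← h]
    simp only [hΩ2]
    abel
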